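/- Let A and B be C*-algebras, C ⊆ A a C*-subalgebra, and η : A → B a linear map whose restriction to C is a bounded *-homomorphism. Suppose η is compressible to C: for every a ∈ A and ε > 0 there exist φ in the unitization of C and c ∈ C with ‖φ‖ ≤ 1, η(φ) = 1 (extending η unitally to unitizations), η(a) = η(c), and ‖φ* a φ − c‖ ≤ ε. Then for any approximate unit (u_λ) of the ideal ker(η|_C : C → B), and for every a ∈ A, one has ‖η(a)‖ = lim_λ ‖(1 − u_λ) a (1 − u_λ)‖, where the products (1−u_λ)a(1−u_λ) are computed in the unitization of A. -/

import Mathlib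

open Filter Topology

lemma aux_contractive {C B : Type*} [NonUnitalCStarAlgebra C] [NonUnitalCStarAlgebra B]
    (π : C →⋆ₙₐ[ℂ] B) : Continuous π :=
  AddMonoidHomClass.continuous_of_bound π 1 fun x => by
    simpa [one_mul] using NonUnitalStarAlgHom.norm_apply_le π x

lemma aux_bnd3 {U : Type*} [NonUnitalSeminormedRing U] (p q s : U) :
    ‖p * q * s‖ ≤ ‖p‖ * ‖q‖ * ‖s‖ :=
  calc ‖p * q * s‖ ≤ ‖p * q‖ * ‖s‖ := norm_mul_le _ _
    _ ≤ ‖p‖ * ‖q‖ * ‖s‖ := by gcongr; exact norm_mul_le p q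

lemma aux_prod_bound {U : Type*} [NonUnitalSeminormedRing U] {p q s : U} {P Q S : ℝ}
    (hp : ‖p‖ ≤ P) (hq : ‖q‖ ≤ Q) (hs : ‖s‖ ≤ S) : ‖p * q * s‖ ≤ P * Q * S := by
  refine le_trans (aux_bnd3 p q s) ?_
  have h1 : (0:ℝ) ≤ ‖p‖ := norm_nonneg p
  have h2 : (0:ℝ) ≤ ‖q‖ := norm_nonneg q
  have h3 : (0:ℝ) ≤ ‖s‖ := norm_nonneg s
  exact mul_le_mul (mul_le_mul hp hq h2 (h1.trans hp)) hs h3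
    (mul_nonneg (h1.trans hp) (h2.trans hq))

lemma aux_unit_norm {A : Type*} [NonUnitalCStarAlgebra A] (v : A) (h1 : ‖star v * v‖ ≤ 1) :
    ‖(1 : Unitization ℂ A) - ((star v * v : A) : Unitization ℂ A)‖ ≤ 1 := by
  letI := CStarAlgebra.spectralOrder (Unitization ℂ A)
  letI := CStarAlgebra.spectralOrderedRing (Unitization ℂ A)
  have hw0 : (0 : Unitization ℂ A) ≤ ((star v * v : A) : Unitization ℂ A) := by
    rw [Unitization.inr_mul, Unitization.inr_star]
    exact star_mul_self_nonneg _
  have hwn : ‖((star v * v : A) : Unitization ℂ A)‖ ≤ 1 := by rwa [Unitization.norm_inr]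
  have hw1 : ((star v * v : A) : Unitization ℂ A) ≤ 1 :=
    (CStarAlgebra.norm_le_one_iff_of_nonneg _ hw0).mp hwn
  have h0 : (0 : Unitization ℂ A) ≤ 1 - ((star v * v : A) : Unitization ℂ A) :=
    sub_nonneg.mpr hw1
  have h1' : 1 - ((star v * v : A) : Unitization ℂ A) ≤ 1 := by
    simpa using sub_le_self (1 : Unitization ℂ A) hw0
  exact (CStarAlgebra.norm_le_one_iff_of_nonneg _ h0).mpr h1'

lemma aux_qs_nonneg {C : Type*} [NonUnitalCStarAlgebra C] (c : C) :
    ∀ s ∈ quasispectrum ℝ (star c * c), 0 ≤ s := by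
  letI := CStarAlgebra.spectralOrder (Unitization ℂ C)
  letI := CStarAlgebra.spectralOrderedRing (Unitization ℂ C)
  intro s hs
  rw [Unitization.quasispectrum_eq_spectrum_inr' ℝ ℂ] at hs
  have h0 : (0 : Unitization ℂ C) ≤ ((star c * c : C) : Unitization ℂ C) := by
    rw [Unitization.inr_mul, Unitization.inr_star]
    exact star_mul_self_nonneg _
  exact spectrum_nonneg_of_nonneg h0 hs

lemma aux_dist' {C B : Type*} [NonUnitalCStarAlgebra C] [NonUnitalCStarAlgebra B]
    (π : C →⋆ₙₐ[ℂ] B) (c : C) {k : ℝ} (hk : ‖π c‖ ^ 2 < k) :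
    ∃ x : C, π x = 0 ∧ ‖c - x‖ ^ 2 ≤ k := by
  have hk0 : 0 < k := lt_of_le_of_lt (by positivity) hk
  have hb : IsSelfAdjoint (star c * c) := IsSelfAdjoint.star_mul_self c
  have hπb : IsSelfAdjoint (π (star c * c)) := hb.map π
  set f : ℝ → ℝ := fun s => max (s - k) 0 / max s k with hfdef
  have hfc : Continuous f := by
    apply Continuous.div (by fun_prop) (by fun_prop)
    intro s
    exact ne_of_gt (lt_max_iff.2 (Or.inr hk0))
  have hf0 : f 0 = 0 := by
    rw [hfdef]
    simp [hk0.le]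
  have hy : IsSelfAdjoint (cfcₙ f (star c * c)) := cfcₙ_predicate f (star c * c)
  refine ⟨c * cfcₙ f (star c * c), ?_, ?_⟩
  · rw [map_mul]
    have h2 : π (cfcₙ f (star c * c)) = cfcₙ f (π (star c * c)) :=
      NonUnitalStarAlgHomClass.map_cfcₙ π f (star c * c) hfc.continuousOn hf0
        (aux_contractive π) hb hπb
    have h3 : cfcₙ f (π (star c * c)) = 0 := by
      have hzero : (Set.EqOn f 0 (quasispectrum ℝ (π (star c * c)))) := by
        intro s hs
        have hsle : ‖(id s : ℝ)‖ ≤ ‖cfcₙ (id : ℝ → ℝ) (π (star c * c))‖ :=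
          norm_apply_le_norm_cfcₙ (id : ℝ → ℝ) (π (star c * c)) hs continuousOn_id rfl hπb
        rw [cfcₙ_id ℝ (π (star c * c)) hπb] at hsle
        have hπb2 : ‖π (star c * c)‖ ≤ ‖π c‖ ^ 2 := by
          rw [map_mul, map_star, CStarRing.norm_star_mul_self]
          exact le_of_eq (sq (‖π c‖)).symm
        have hsk : s ≤ k := by
          have habs : |s| ≤ ‖π c‖ ^ 2 := le_trans hsle hπb2
          have := le_abs_self s
          linarith [habs, hk]
        simp only [hfdef, Pi.zero_apply]
        rw [max_eq_right (by linarith), zero_div]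
      rw [cfcₙ_congr hzero, cfcₙ_zero]
    rw [h2, h3, mul_zero]
  · -- norm estimate
    have hexpand : star (c - c * cfcₙ f (star c * c)) * (c - c * cfcₙ f (star c * c))
        = star c * c - (star c * c) * cfcₙ f (star c * c)
          - cfcₙ f (star c * c) * (star c * c)
          + cfcₙ f (star c * c) * ((star c * c) * cfcₙ f (star c * c)) := by
      rw [star_sub, star_mul, hy.star_eq]
      noncomm_ring
    have hid : ContinuousOn (fun s : ℝ => s) (quasispectrum ℝ (star c * c)) := continuousOn_id
    have hfo : ContinuousOn f (quasispectrum ℝ (star c * c)) := hfc.continuousOn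
    have hmul1 : ContinuousOn (fun s : ℝ => s * f s) (quasispectrum ℝ (star c * c)) := by fun_prop
    have hmul2 : ContinuousOn (fun s : ℝ => f s * s) (quasispectrum ℝ (star c * c)) := by fun_prop
    have hmul3 : ContinuousOn (fun s : ℝ => f s * (s * f s)) (quasispectrum ℝ (star c * c)) := by
      fun_prop
    have hsub1 : ContinuousOn (fun s : ℝ => s - s * f s) (quasispectrum ℝ (star c * c)) := by
      fun_prop
    have hsub2 : ContinuousOn (fun s : ℝ => s - s * f s - f s * s)
        (quasispectrum ℝ (star c * c)) := by fun_prop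
    have hsum : cfcₙ (fun s => s - s * f s - f s * s + f s * (s * f s)) (star c * c)
        = star c * c - (star c * c) * cfcₙ f (star c * c)
          - cfcₙ f (star c * c) * (star c * c)
          + cfcₙ f (star c * c) * ((star c * c) * cfcₙ f (star c * c)) := by
      rw [cfcₙ_add (fun s => s - s * f s - f s * s) (fun s => f s * (s * f s)) (star c * c)
            hsub2 (by simp [hf0]) hmul3 (by simp [hf0]),
          cfcₙ_sub (fun s => s - s * f s) (fun s => f s * s) (star c * c)
            hsub1 (by simp [hf0]) hmul2 (by simp [hf0]),
          cfcₙ_sub (fun s => s) (fun s => s * f s) (star c * c)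
            hid rfl hmul1 (by simp [hf0]),
          cfcₙ_mul (fun s => s) f (star c * c) hid rfl hfo hf0,
          cfcₙ_mul f (fun s => s) (star c * c) hfo hf0 hid rfl,
          cfcₙ_mul f (fun s => s * f s) (star c * c) hfo hf0 hmul1 (by simp [hf0]),
          cfcₙ_mul (fun s => s) f (star c * c) hid rfl hfo hf0,
          cfcₙ_id' ℝ (star c * c) hb]
    have hnorm : ‖star (c - c * cfcₙ f (star c * c)) * (c - c * cfcₙ f (star c * c))‖ ≤ k := by
      rw [hexpand, ← hsum]
      apply norm_cfcₙ_le
      intro s hs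
      have hs0 : 0 ≤ s := aux_qs_nonneg c s hs
      have key : s - s * f s - f s * s + f s * (s * f s) = s * (1 - f s) ^ 2 := by ring
      rw [key]
      rcases le_or_gt s k with h | h
      · have hfs : f s = 0 := by
          rw [hfdef]
          simp only
          rw [max_eq_right (by linarith), zero_div]
        rw [hfs]
        simp only [sub_zero, one_pow, mul_one]
        rw [Real.norm_eq_abs, abs_of_nonneg hs0]
        exact h
      · have hfs : f s = (s - k) / s := by
          rw [hfdef]
          simp only
          rw [max_eq_left (by linarith), max_eq_left (by linarith)]
        have hsne : s ≠ 0 := by linarith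
        have h1f : 1 - f s = k / s := by
          rw [hfs]
          field_simp
          ring
        rw [h1f]
        have heq : s * (k / s) ^ 2 = k * (k / s) := by
          field_simp
        rw [heq, Real.norm_eq_abs, abs_of_nonneg (by positivity)]
        have hle1 : k / s ≤ 1 := by
          rw [div_le_one (by linarith)]
          linarith
        nlinarith
    have hcs := CStarRing.norm_star_mul_self
      (x := c - c * cfcₙ f (star c * c))
    rw [hcs] at hnorm
    calc ‖c - c * cfcₙ f (star c * c)‖ ^ 2
        = ‖c - c * cfcₙ f (star c * c)‖ * ‖c - c * cfcₙ f (star c * c)‖ := sq _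
      _ ≤ k := hnorm


set_option maxHeartbeats 1000000 in
/-- **Norm equation for compressible maps.**  If `η : A → B` is a linear map between
C*-algebras which is compressible to a closed *-subalgebra `C` on which it restricts to a
bounded *-homomorphism, then for every approximate unit `(u i)` of `ker (η|_C)` and every
`a ∈ A` one has `‖η a‖ = lim_i ‖(1 - u i) a (1 - u i)‖`, the products being computed in
the unitization of `A`.  Here an element `φ` of the unitization of `C` with `η φ = 1`
(for the unital extension of `η`) is written as `φ = 1 + φ₀` with `φ₀ ∈ C`, `η φ₀ = 0`,
and positivity of `u i` is expressed as `u i = star v * v` with `v ∈ C`. -/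
theorem stmt_15 {A B : Type*} [NonUnitalCStarAlgebra A] [NonUnitalCStarAlgebra B]
    (C : NonUnitalStarSubalgebra ℂ A) (hC : IsClosed (C : Set A))
    (η : A →ₗ[ℂ] B)
    (hmul : ∀ x ∈ C, ∀ y ∈ C, η (x * y) = η x * η y)
    (hstar : ∀ x ∈ C, η (star x) = star (η x))
    (hbdd : ∃ M : ℝ, ∀ c ∈ C, ‖η c‖ ≤ M * ‖c‖)
    (hcomp : ∀ a : A, ∀ ε > (0 : ℝ), ∃ φ₀ ∈ C, ∃ c ∈ C,
      η φ₀ = 0 ∧ ‖(1 : Unitization ℂ A) + φ₀‖ ≤ 1 ∧ η a = η c ∧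
      ‖star ((1 : Unitization ℂ A) + φ₀) * (a : Unitization ℂ A) *
        ((1 : Unitization ℂ A) + φ₀) - (c : Unitization ℂ A)‖ ≤ ε)
    {ι : Type*} [Nonempty ι] [SemilatticeSup ι] (u : ι → A)
    (humem : ∀ i, u i ∈ C) (huker : ∀ i, η (u i) = 0)
    (hupos : ∀ i, ∃ v ∈ C, u i = star v * v) (hunorm : ∀ i, ‖u i‖ ≤ 1)
    (huapprox : ∀ x ∈ C, η x = 0 →
      Tendsto (fun i => ‖x - u i * x‖) atTop (𝓝 0)) :
    ∀ a : A, Tendsto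
      (fun i => ‖((1 : Unitization ℂ A) - u i) * (a : Unitization ℂ A) *
        ((1 : Unitization ℂ A) - u i)‖) atTop (𝓝 ‖η a‖) := by
  haveI : CompleteSpace C := hC.completeSpace_coe
  -- the restriction of `η` to `C` as a star algebra homomorphism
  let π : C →⋆ₙₐ[ℂ] B :=
    { toFun := fun x => η (x : A)
      map_add' := fun x y => by
        show η ((x + y : C) : A) = η (x : A) + η (y : A)
        rw [AddMemClass.coe_add]
        exact map_add η _ _
      map_smul' := fun r x => by
        show η ((r • x : C) : A) = r • η (x : A)
        rw [SetLike.val_smul]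
        exact map_smul η _ _
      map_zero' := by
        show η ((0 : C) : A) = 0
        rw [ZeroMemClass.coe_zero]
        exact map_zero η
      map_mul' := fun x y => by
        show η ((x * y : C) : A) = η (x : A) * η (y : A)
        rw [MulMemClass.coe_mul]
        exact hmul x x.2 y y.2
      map_star' := fun x => by
        show η ((star x : C) : A) = star (η (x : A))
        rw [show ((star x : C) : A) = star (x : A) from rfl]
        exact hstar x x.2 }
  have hcontr : ∀ z : A, z ∈ C → ‖η z‖ ≤ ‖z‖ := fun z hz => by
    have := NonUnitalStarAlgHom.norm_apply_le π (⟨z, hz⟩ : C)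
    exact this
  have hustar : ∀ i, star (u i) = u i := fun i => by
    obtain ⟨v, _, hv⟩ := hupos i
    rw [hv, star_mul, star_star]
  have hE : ∀ i, ‖(1 : Unitization ℂ A) - (u i : Unitization ℂ A)‖ ≤ 1 := fun i => by
    obtain ⟨v, _, hv⟩ := hupos i
    rw [hv]
    exact aux_unit_norm v (by rw [← hv]; exact hunorm i)
  intro a
  rw [Metric.tendsto_nhds]
  intro ε hε
  set ε₁ := ε / 15 with hε₁def
  have hε₁ : 0 < ε₁ := by positivity
  set ε₂ := min (ε₁ / (‖a‖ + 1)) 1 with hε₂def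
  have hε₂ : 0 < ε₂ := lt_min (by positivity) one_pos
  have hε₂1 : ε₂ ≤ 1 := min_le_right _ _
  have hε₂a : ε₂ * (‖a‖ + 1) ≤ ε₁ := by
    have h := min_le_left (ε₁ / (‖a‖ + 1)) 1
    rw [← le_div_iff₀ (by positivity)]
    exact h
  have hε₂a' : ε₂ * ‖a‖ ≤ ε₁ := by nlinarith [norm_nonneg a, hε₂.le]
  have hε₂ε₁ : ε₂ ≤ ε₁ := by nlinarith [norm_nonneg a]
  obtain ⟨φ₀, hφ₀C, c, hcC, hηφ₀, hφn, hηac, hcpr⟩ := hcomp a ε₁ hε₁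
  obtain ⟨x, hπx, hxd⟩ := aux_dist' π (⟨c, hcC⟩ : C) (k := (‖η c‖ + ε₁) ^ 2)
    (by
      have hπc : π (⟨c, hcC⟩ : C) = η c := rfl
      rw [hπc]
      nlinarith [norm_nonneg (η c)])
  have hηx : η (x : A) = 0 := hπx
  have hxdist : ‖c - (x : A)‖ ≤ ‖η c‖ + ε₁ := by
    have h0 : ‖(⟨c, hcC⟩ : C) - x‖ = ‖c - (x : A)‖ := rfl
    rw [h0] at hxd
    nlinarith [norm_nonneg (c - (x : A)), norm_nonneg (η c), hε₁]
  have t1 : ∀ᶠ i in atTop, ‖φ₀ - u i * φ₀‖ < ε₂ :=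
    (huapprox φ₀ hφ₀C hηφ₀).eventually_lt_const hε₂
  have t2 : ∀ᶠ i in atTop, ‖star φ₀ - u i * star φ₀‖ < ε₂ :=
    (huapprox (star φ₀) (star_mem hφ₀C)
      (by rw [hstar φ₀ hφ₀C, hηφ₀, star_zero])).eventually_lt_const hε₂
  have t3 : ∀ᶠ i in atTop, ‖(x : A) - u i * (x : A)‖ < ε₂ :=
    (huapprox (x : A) x.2 hηx).eventually_lt_const hε₂
  filter_upwards [t1, t2, t3] with i h1 h2 h3
  set e : Unitization ℂ A := (1 : Unitization ℂ A) - (u i : Unitization ℂ A) with hedef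
  set φ : Unitization ℂ A := (1 : Unitization ℂ A) + (φ₀ : Unitization ℂ A) with hφdef
  have he : ‖e‖ ≤ 1 := hE i
  have hestar : star e = e := by
    rw [hedef, star_sub, star_one, ← Unitization.inr_star, hustar i]
  have hφs : star φ = (1 : Unitization ℂ A) + ((star φ₀ : A) : Unitization ℂ A) := by
    rw [hφdef, star_add, star_one, ← Unitization.inr_star]
  have ne1 : ‖e * (φ₀ : Unitization ℂ A)‖ < ε₂ := by
    have heq : e * (φ₀ : Unitization ℂ A) = ((φ₀ - u i * φ₀ : A) : Unitization ℂ A) := by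
      rw [hedef, sub_mul, one_mul, Unitization.inr_sub, Unitization.inr_mul]
    rw [heq, Unitization.norm_inr]
    exact h1
  have ne2 : ‖e * ((star φ₀ : A) : Unitization ℂ A)‖ < ε₂ := by
    have heq : e * ((star φ₀ : A) : Unitization ℂ A)
        = ((star φ₀ - u i * star φ₀ : A) : Unitization ℂ A) := by
      rw [hedef, sub_mul, one_mul, Unitization.inr_sub, Unitization.inr_mul]
    rw [heq, Unitization.norm_inr]
    exact h2
  have ne3 : ‖(φ₀ : Unitization ℂ A) * e‖ < ε₂ := by
    have heq : (φ₀ : Unitization ℂ A) * e = star (e * ((star φ₀ : A) : Unitization ℂ A)) := by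
      rw [star_mul, hestar, ← Unitization.inr_star, star_star]
    rw [heq, norm_star]
    exact ne2
  have ne4 : ‖((star φ₀ : A) : Unitization ℂ A) * e‖ < ε₂ := by
    have heq : ((star φ₀ : A) : Unitization ℂ A) * e = star (e * (φ₀ : Unitization ℂ A)) := by
      rw [star_mul, hestar, ← Unitization.inr_star]
    rw [heq, norm_star]
    exact ne1
  have ne5 : ‖e * ((x : A) : Unitization ℂ A)‖ < ε₂ := by
    have heq : e * ((x : A) : Unitization ℂ A)
        = (((x : A) - u i * (x : A) : A) : Unitization ℂ A) := by
      rw [hedef, sub_mul, one_mul, Unitization.inr_sub, Unitization.inr_mul]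
    rw [heq, Unitization.norm_inr]
    exact h3
  have hna : ‖(a : Unitization ℂ A)‖ ≤ ‖a‖ := le_of_eq (Unitization.norm_inr a)
  set T : Unitization ℂ A := e * (a : Unitization ℂ A) * e with hTdef
  set S : Unitization ℂ A := e * (c : Unitization ℂ A) * e with hSdef
  set g : Unitization ℂ A := star φ * (a : Unitization ℂ A) * φ with hgdef
  have hg : ‖g - (c : Unitization ℂ A)‖ ≤ ε₁ := hcpr
  -- first error term
  have hid1 : T - star φ * T * φ
      = -(((star φ₀ : A) : Unitization ℂ A) * T) - T * (φ₀ : Unitization ℂ A)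
        - ((star φ₀ : A) : Unitization ℂ A) * T * (φ₀ : Unitization ℂ A) := by
    rw [hφs, hφdef]
    noncomm_ring
  have hsT : ((star φ₀ : A) : Unitization ℂ A) * T
      = ((star φ₀ : A) : Unitization ℂ A) * e * (a : Unitization ℂ A) * e := by
    rw [hTdef]
    simp only [← mul_assoc]
  have hTp : T * (φ₀ : Unitization ℂ A)
      = e * (a : Unitization ℂ A) * (e * (φ₀ : Unitization ℂ A)) := by
    rw [hTdef]
    simp only [← mul_assoc]
  have hsTp : ((star φ₀ : A) : Unitization ℂ A) * T * (φ₀ : Unitization ℂ A)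
      = ((star φ₀ : A) : Unitization ℂ A) * e * (a : Unitization ℂ A)
        * (e * (φ₀ : Unitization ℂ A)) := by
    rw [hTdef]
    simp only [← mul_assoc]
  have E1 : ‖T - star φ * T * φ‖ ≤ 3 * ε₁ := by
    rw [hid1]
    have b1 : ‖((star φ₀ : A) : Unitization ℂ A) * T‖ ≤ ε₂ * ‖a‖ * 1 := by
      rw [hsT]; exact aux_prod_bound ne4.le hna he
    have b2 : ‖T * (φ₀ : Unitization ℂ A)‖ ≤ 1 * ‖a‖ * ε₂ := by
      rw [hTp]; exact aux_prod_bound he hna ne1.le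
    have b3 : ‖((star φ₀ : A) : Unitization ℂ A) * T * (φ₀ : Unitization ℂ A)‖
        ≤ ε₂ * ‖a‖ * ε₂ := by
      rw [hsTp]; exact aux_prod_bound ne4.le hna ne1.le
    have c3 : ε₂ * ‖a‖ * ε₂ ≤ ε₁ := by nlinarith [hε₂a', hε₂.le, hε₂1, norm_nonneg a]
    calc ‖-(((star φ₀ : A) : Unitization ℂ A) * T) - T * (φ₀ : Unitization ℂ A)
          - ((star φ₀ : A) : Unitization ℂ A) * T * (φ₀ : Unitization ℂ A)‖
        ≤ ‖-(((star φ₀ : A) : Unitization ℂ A) * T) - T * (φ₀ : Unitization ℂ A)‖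
          + ‖((star φ₀ : A) : Unitization ℂ A) * T * (φ₀ : Unitization ℂ A)‖ :=
          norm_sub_le _ _
      _ ≤ ‖-(((star φ₀ : A) : Unitization ℂ A) * T)‖ + ‖T * (φ₀ : Unitization ℂ A)‖
          + ‖((star φ₀ : A) : Unitization ℂ A) * T * (φ₀ : Unitization ℂ A)‖ := by
          gcongr
          exact norm_sub_le _ _
      _ ≤ 3 * ε₁ := by
          rw [norm_neg]
          have := hε₂a'
          linarith [b1, b2, b3, c3]
  -- second error term
  have hb2 : star φ * T * φ = (star φ * e) * (a : Unitization ℂ A) * (e * φ) := by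
    rw [hTdef]
    simp only [← mul_assoc]
  have hb3 : e * g * e = (e * star φ) * (a : Unitization ℂ A) * (φ * e) := by
    rw [hgdef]
    simp only [← mul_assoc]
  have hd : ‖star φ * e - e * star φ‖ ≤ ε₂ + ε₂ := by
    have heq : star φ * e - e * star φ
        = ((star φ₀ : A) : Unitization ℂ A) * e - e * ((star φ₀ : A) : Unitization ℂ A) := by
      rw [hφs]
      noncomm_ring
    rw [heq]
    exact (norm_sub_le _ _).trans (by linarith [ne4.le, ne2.le])
  have hd' : ‖e * φ - φ * e‖ ≤ ε₂ + ε₂ := by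
    have heq : e * φ - φ * e
        = e * (φ₀ : Unitization ℂ A) - (φ₀ : Unitization ℂ A) * e := by
      rw [hφdef]
      noncomm_ring
    rw [heq]
    exact (norm_sub_le _ _).trans (by linarith [ne1.le, ne3.le])
  have heφ : ‖e * φ‖ ≤ 1 := by
    refine (norm_mul_le e φ).trans ?_
    nlinarith [norm_nonneg e, norm_nonneg φ, he, hφn]
  have hesφ : ‖e * star φ‖ ≤ 1 := by
    refine (norm_mul_le e (star φ)).trans ?_
    rw [norm_star]
    nlinarith [norm_nonneg e, norm_nonneg φ, he, hφn]
  have hkey : (star φ * e) * (a : Unitization ℂ A) * (e * φ)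
      - (e * star φ) * (a : Unitization ℂ A) * (φ * e)
      = (star φ * e - e * star φ) * (a : Unitization ℂ A) * (e * φ)
        + (e * star φ) * (a : Unitization ℂ A) * (e * φ - φ * e) := by
    noncomm_ring
  have E2 : ‖star φ * T * φ - e * g * e‖ ≤ 4 * ε₁ := by
    rw [hb2, hb3, hkey]
    have b1 : ‖(star φ * e - e * star φ) * (a : Unitization ℂ A) * (e * φ)‖
        ≤ (ε₂ + ε₂) * ‖a‖ * 1 := aux_prod_bound hd hna heφ
    have b2 : ‖(e * star φ) * (a : Unitization ℂ A) * (e * φ - φ * e)‖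
        ≤ 1 * ‖a‖ * (ε₂ + ε₂) := aux_prod_bound hesφ hna hd'
    refine (norm_add_le _ _).trans ?_
    have h4 : ε₂ * ‖a‖ ≤ ε₁ := hε₂a'
    linarith [b1, b2]
  -- third error term
  have hid3 : e * g * e - S = e * (g - (c : Unitization ℂ A)) * e := by
    rw [hSdef]
    noncomm_ring
  have E3 : ‖e * g * e - S‖ ≤ ε₁ := by
    rw [hid3]
    have := aux_prod_bound he hg he
    simpa using this
  -- total
  have hTS : ‖T - S‖ ≤ 8 * ε₁ := by
    have hsplit : T - S = (T - star φ * T * φ) + (star φ * T * φ - e * g * e)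
        + (e * g * e - S) := by abel
    rw [hsplit]
    refine (norm_add_le _ _).trans ?_
    have := (norm_add_le (T - star φ * T * φ) (star φ * T * φ - e * g * e))
    linarith [E1, E2, E3]
  -- bounds on ‖S‖
  have hzC : c - u i * c - c * u i + u i * c * u i ∈ C :=
    add_mem (sub_mem (sub_mem hcC (mul_mem (humem i) hcC)) (mul_mem hcC (humem i)))
      (mul_mem (mul_mem (humem i) hcC) (humem i))
  have hSz : S = ((c - u i * c - c * u i + u i * c * u i : A) : Unitization ℂ A) := by
    rw [hSdef, hedef]
    simp only [Unitization.inr_add, Unitization.inr_sub, Unitization.inr_mul]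
    noncomm_ring
  have he1 : η (u i * c) = 0 := by rw [hmul (u i) (humem i) c hcC, huker i, zero_mul]
  have he2 : η (c * u i) = 0 := by rw [hmul c hcC (u i) (humem i), huker i, mul_zero]
  have he3 : η (u i * c * u i) = 0 := by
    rw [hmul (u i * c) (mul_mem (humem i) hcC) (u i) (humem i), he1, zero_mul]
  have hηz : η (c - u i * c - c * u i + u i * c * u i) = η c := by
    rw [map_add, map_sub, map_sub, he1, he2, he3]
    abel
  have hSlow : ‖η c‖ ≤ ‖S‖ := by
    rw [hSz, Unitization.norm_inr, ← hηz]
    exact hcontr _ hzC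
  have hSup : ‖S‖ ≤ ‖η c‖ + ε₁ + ε₂ := by
    have hsplit : S = e * ((c : Unitization ℂ A) - ((x : A) : Unitization ℂ A)) * e
        + e * ((x : A) : Unitization ℂ A) * e := by
      rw [hSdef]
      noncomm_ring
    rw [hsplit]
    refine (norm_add_le _ _).trans ?_
    have b1 : ‖e * ((c : Unitization ℂ A) - ((x : A) : Unitization ℂ A)) * e‖
        ≤ 1 * (‖η c‖ + ε₁) * 1 := by
      refine aux_prod_bound he ?_ he
      rw [← Unitization.inr_sub, Unitization.norm_inr]
      exact hxdist
    have b2 : ‖e * ((x : A) : Unitization ℂ A) * e‖ ≤ ε₂ * 1 := by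
      refine (norm_mul_le _ _).trans ?_
      have := ne5.le
      gcongr
    linarith [b1, b2]
  -- conclusion
  rw [Real.dist_eq, hηac]
  have habs : |‖T‖ - ‖S‖| ≤ ‖T - S‖ := abs_norm_sub_norm_le T S
  obtain ⟨l1, l2⟩ := abs_le.mp habs
  rw [abs_sub_lt_iff]
  constructor <;> linarith [hTS, hSlow, hSup, hε₂ε₁, hε₁]
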